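/- The Schur complement of 𝒞 in the dissipation matrix Ĥ is block diagonal: 𝒜 − ℬ𝒞⁻¹ℬᵀ = diag(Ã_1, ..., Ã_N), where each Ã_k equals the hydrodynamic block A_k except that its (5,5) entry is reduced by Ē_mag², i.e., Ã_k,(5,5) = Ĥ_k,(5,5) − Ē_mag². -/

import Mathlib

open Matrix

/-- The hydrodynamic 5×5 block `A_k` of the multi-ion GLM-MHD dissipation
matrix (with additive magnetic term `Emag2` in the `(5,5)` entry; taking
`Emag2 = 0` gives the block `Ã_k`). -/
noncomputable def Ablock (ρ pbar pstar γ Ebar Emag2 : ℝ) (v : Fin 3 → ℝ) :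
    Matrix (Fin 5) (Fin 5) ℝ :=
  !![ρ, ρ * v 0, ρ * v 1, ρ * v 2, Ebar;
     ρ * v 0, ρ * v 0 * v 0 + pbar, ρ * v 0 * v 1, ρ * v 0 * v 2,
       (Ebar + pbar) * v 0;
     ρ * v 1, ρ * v 1 * v 0, ρ * v 1 * v 1 + pbar, ρ * v 1 * v 2,
       (Ebar + pbar) * v 1;
     ρ * v 2, ρ * v 2 * v 0, ρ * v 2 * v 1, ρ * v 2 * v 2 + pbar,
       (Ebar + pbar) * v 2;
     Ebar, (Ebar + pbar) * v 0, (Ebar + pbar) * v 1, (Ebar + pbar) * v 2,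
       (1 / ρ) * (pstar ^ 2 / (γ - 1) + Ebar ^ 2)
         + pbar * (v 0 ^ 2 + v 1 ^ 2 + v 2 ^ 2) + Emag2]

/-- The GLM block vector `(⟨B₁⟩, ⟨B₂⟩, ⟨B₃⟩, ⟨ψ⟩)`. -/
def bvec (Bavg : Fin 3 → ℝ) (ψ : ℝ) : Fin 4 → ℝ := ![Bavg 0, Bavg 1, Bavg 2, ψ]

/-- The upper-left block `𝒜 ∈ ℝ^{5N×5N}`: diagonal blocks `A_k`,
off-diagonal blocks with single nonzero `(5,5)` entry `Ē_mag²`. -/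
noncomputable def Amat (N : ℕ) (ρln pbar pstar γ Ebar : Fin N → ℝ)
    (v : Fin N → Fin 3 → ℝ) (τ : ℝ) (Bavg : Fin 3 → ℝ) (ψ : ℝ) :
    Matrix (Fin N × Fin 5) (Fin N × Fin 5) ℝ :=
  let Emag2 : ℝ := τ * ((∑ i, (Bavg i) ^ 2) + ψ ^ 2)
  fun i j =>
    if i.1 = j.1 then
      Ablock (ρln i.1) (pbar i.1) (pstar i.1) (γ i.1) (Ebar i.1) Emag2 (v i.1)
        i.2 j.2
    else if i.2 = 4 ∧ j.2 = 4 then Emag2 else 0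

/-- The off-diagonal block `ℬ ∈ ℝ^{5N×4}`: stacked blocks whose only nonzero
row is the 5th row `(τ⁺⟨B₁⟩, τ⁺⟨B₂⟩, τ⁺⟨B₃⟩, τ⁺⟨ψ⟩)`. -/
noncomputable def Bmat (N : ℕ) (τ : ℝ) (Bavg : Fin 3 → ℝ) (ψ : ℝ) :
    Matrix (Fin N × Fin 5) (Fin 4) ℝ :=
  fun i c => if i.2 = 4 then τ * bvec Bavg ψ c else 0

/-- The Schur complement of `𝒞 = τ⁺I₄` in `Ĥ` is block diagonal:
`𝒜 − ℬ𝒞⁻¹ℬᵀ = diag(Ã_1, …, Ã_N)`, where `Ã_k` equals `A_k` except that its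
`(5,5)` entry is reduced by `Ē_mag²` (i.e. `A_k` with `Emag2 = 0`). -/
theorem schur_complement_block_diagonal (N : ℕ)
    (ρln pbar pstar γ Ebar : Fin N → ℝ) (v : Fin N → Fin 3 → ℝ)
    (τ : ℝ) (hτ : 0 < τ) (Bavg : Fin 3 → ℝ) (ψ : ℝ) :
    Amat N ρln pbar pstar γ Ebar v τ Bavg ψ
      - Bmat N τ Bavg ψ * (τ • (1 : Matrix (Fin 4) (Fin 4) ℝ))⁻¹
          * (Bmat N τ Bavg ψ)ᵀ
      = fun i j =>
          if i.1 = j.1 then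
            Ablock (ρln i.1) (pbar i.1) (pstar i.1) (γ i.1) (Ebar i.1) 0
              (v i.1) i.2 j.2
          else 0 := by
  have hτ' : τ ≠ 0 := hτ.ne'
  have hinv : (τ • (1 : Matrix (Fin 4) (Fin 4) ℝ))⁻¹ = τ⁻¹ • 1 := by
    apply Matrix.inv_eq_right_inv
    rw [smul_mul_smul_comm, one_mul, mul_inv_cancel₀ hτ', one_smul]
  rw [hinv]
  have hprod : ∀ i j : Fin N × Fin 5,
      (Bmat N τ Bavg ψ * (τ⁻¹ • (1 : Matrix (Fin 4) (Fin 4) ℝ))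
        * (Bmat N τ Bavg ψ)ᵀ) i j
      = if i.2 = 4 ∧ j.2 = 4 then τ * ((∑ c, (Bavg c) ^ 2) + ψ ^ 2) else 0 := by
    intro i j
    simp only [Matrix.mul_apply, Matrix.smul_apply, Matrix.one_apply,
      Matrix.transpose_apply, Bmat, smul_eq_mul, mul_ite, mul_zero, mul_one,
      ite_mul, zero_mul, Finset.sum_ite_eq', Finset.mem_univ, if_true]
    by_cases hi : i.2 = 4 <;> by_cases hj : j.2 = 4 <;>
      simp only [hi, hj, if_true, if_false, and_self, and_false, false_and,
        Finset.sum_const_zero]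
    rw [Fin.sum_univ_four, Fin.sum_univ_three]
    simp only [bvec, Matrix.cons_val_zero, Matrix.cons_val_one, Matrix.head_cons,
      Matrix.cons_val_two, Matrix.tail_cons, Matrix.cons_val_three]
    field_simp
  have hAb : ∀ (ρ p ps g E e : ℝ) (w : Fin 3 → ℝ) (a b : Fin 5),
      ¬(a = 4 ∧ b = 4) → Ablock ρ p ps g E e w a b = Ablock ρ p ps g E 0 w a b := by
    intro ρ p ps g E e w a b h
    fin_cases a <;> fin_cases b <;> simp [Ablock] <;>
      exact absurd ⟨rfl, rfl⟩ h
  ext i j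
  rw [Matrix.sub_apply, hprod]
  by_cases hij : i.1 = j.1
  · by_cases h44 : i.2 = 4 ∧ j.2 = 4
    · obtain ⟨h1, h2⟩ := h44
      simp only [Amat, hij, if_pos, h1, h2, and_self, if_true]
      rw [show ∀ ρ p ps g E e w, Ablock ρ p ps g E e w 4 4 = Ablock ρ p ps g E 0 w 4 4 + e from fun _ _ _ _ _ _ _ => by simp [Ablock]]; ring
    · rw [if_neg h44]
      simp only [Amat, hij, if_true, sub_zero]
      rw [hAb _ _ _ _ _ _ _ _ _ h44]
  · simp only [Amat, hij, if_false]
    by_cases h44 : i.2 = 4 ∧ j.2 = 4 <;> simp [h44]
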